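/- arXiv:2107.10635 — 3 statements merged into one kernel-verified Lean document; each statement's English description precedes it below -/
import Mathlib

section
/- If γ:[0,1]→(0,1) is piecewise constant with values α₁<α₂<...<α_{n+1} on the intervals [r₀,r₁), [r₁,r₂), ..., [r_{n−1},r_n), [r_n, r_{n+1}] where 0=r₀<r₁<...<r_n<r_{n+1}=1, then for all random variables X, Y with Y ≥ 0 almost surely, RecVaR_γ(X,Y) = max over i=1,...,n+1 of VaR_{α_i}(X + (1−r_i)Y). -/
open MeasureTheory

variable {Ω : Type*} [MeasurableSpace Ω]

/-- Value at Risk at level `α`, valued in the extended reals: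
`VaR_α(X) = inf { x : ℝ | P(X + x < 0) ≤ α }`. -/
noncomputable def VaR (μ : Measure Ω) (α : ℝ) (X : Ω → ℝ) : EReal :=
  sInf {y : EReal | ∃ x : ℝ, y = (x : EReal) ∧ μ {ω | X ω + x < 0} ≤ ENNReal.ofReal α}

/-- Recovery Value at Risk with level function `γ`:
`RecVaR_γ(X,Y) = sup_{λ ∈ [0,1]} VaR_{γ(λ)}(X + (1-λ)Y)`. -/
noncomputable def RecVaR (μ : Measure Ω) (γ : ℝ → ℝ) (X Y : Ω → ℝ) : EReal :=
  ⨆ l : Set.Icc (0:ℝ) 1, VaR μ (γ l) (fun ω => X ω + (1 - (l : ℝ)) * Y ω)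

/-- Average Value at Risk at level `α`:
`AVaR_α(X) = (1/α) ∫_0^α VaR_β(X) dβ`. -/
noncomputable def AVaR (μ : Measure Ω) (α : ℝ) (X : Ω → ℝ) : ℝ :=
  (1 / α) * ∫ β in (0:ℝ)..α, (VaR μ β X).toReal

/-- Recovery Average Value at Risk with level function `γ`:
`RecAVaR_γ(X,Y) = sup_{λ ∈ [0,1]} AVaR_{γ(λ)}(X + (1-λ)Y)`. -/
noncomputable def RecAVaR (μ : Measure Ω) (γ : ℝ → ℝ) (X Y : Ω → ℝ) : EReal :=
  ⨆ l : Set.Icc (0:ℝ) 1, ((AVaR μ (γ l) (fun ω => X ω + (1 - (l : ℝ)) * Y ω) : ℝ) : EReal)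

lemma VaR_antitone (μ : Measure Ω) (α : ℝ) {Z₁ Z₂ : Ω → ℝ}
    (h : ∀ᵐ ω ∂μ, Z₂ ω ≤ Z₁ ω) : VaR μ α Z₁ ≤ VaR μ α Z₂ := by
  apply sInf_le_sInf
  rintro y ⟨x, rfl, hx⟩
  refine ⟨x, rfl, le_trans (measure_mono_ae ?_) hx⟩
  filter_upwards [h] with ω hω hmem
  show Z₂ ω + x < 0
  have : Z₁ ω + x < 0 := hmem
  linarith

lemma measure_le_of_VaR_lt {μ : Measure Ω} {α : ℝ} {Z : Ω → ℝ} {x : ℝ}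
    (h : VaR μ α Z < (x : EReal)) :
    μ {ω | Z ω + x < 0} ≤ ENNReal.ofReal α := by
  obtain ⟨y, ⟨x', rfl, hx'⟩, hyx⟩ := sInf_lt_iff.mp h
  have hx'x : x' ≤ x := le_of_lt (EReal.coe_lt_coe_iff.mp hyx)
  refine le_trans (measure_mono ?_) hx'
  intro ω hω; simp only [Set.mem_setOf_eq] at *; linarith

/-- if `γ` is piecewise constant with values `a 0 < ... < a n` (i.e.
`α₁ < ... < α_{n+1}`) on the intervals `[r_{i-1}, r_i)` determined by
`0 = r 0 < r 1 < ... < r (n+1) = 1` (last interval closed at `1`), then for `Y ≥ 0` a.s.,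
`RecVaR_γ(X,Y) = max_{i} VaR_{α_i}(X + (1 - r_i) Y)`. -/
theorem recVaR_piecewise_constant (μ : Measure Ω) [IsProbabilityMeasure μ]
    (n : ℕ) (r : Fin (n + 2) → ℝ) (a : Fin (n + 1) → ℝ)
    (hr : StrictMono r) (hr0 : r 0 = 0) (hr1 : r (Fin.last (n + 1)) = 1)
    (ha : StrictMono a) (ha0 : 0 < a 0) (ha1 : a (Fin.last n) < 1)
    (γ : ℝ → ℝ)
    (hγ : ∀ (i : Fin (n + 1)) (l : ℝ), r i.castSucc ≤ l → l < r i.succ → γ l = a i)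
    (hγ1 : γ 1 = a (Fin.last n))
    (X Y : Ω → ℝ) (hX : Measurable X) (hY : Measurable Y)
    (hY0 : ∀ᵐ ω ∂μ, 0 ≤ Y ω) :
    RecVaR μ γ X Y =
      ⨆ i : Fin (n + 1), VaR μ (a i) (fun ω => X ω + (1 - r i.succ) * Y ω) := by
  have hc1 : ∀ i : Fin (n + 1), r i.succ ≤ 1 := fun i => hr1 ▸ hr.monotone (Fin.le_last _)
  have hb0 : ∀ i : Fin (n + 1), 0 ≤ r i.castSucc := fun i => hr0 ▸ hr.monotone (Fin.zero_le _)
  have hbc : ∀ i : Fin (n + 1), r i.castSucc < r i.succ := fun i => hr Fin.castSucc_lt_succ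
  apply le_antisymm
  · -- RecVaR ≤ sup
    apply iSup_le
    rintro ⟨l, hl0, hl1⟩
    rcases eq_or_lt_of_le hl1 with h1 | h1
    · -- l = 1
      have hfun : (fun ω => X ω + (1 - l) * Y ω)
          = (fun ω => X ω + (1 - r (Fin.last n).succ) * Y ω) := by
        rw [Fin.succ_last, hr1, h1]
      have hγl : γ l = a (Fin.last n) := by rw [h1]; exact hγ1
      calc VaR μ (γ l) (fun ω => X ω + (1 - l) * Y ω)
          = VaR μ (a (Fin.last n)) (fun ω => X ω + (1 - r (Fin.last n).succ) * Y ω) := by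
            rw [hγl, hfun]
        _ ≤ _ := le_iSup (fun i : Fin (n + 1) =>
            VaR μ (a i) (fun ω => X ω + (1 - r i.succ) * Y ω)) (Fin.last n)
    · -- l < 1 : find the interval containing l
      obtain ⟨i, hbl, hlc⟩ : ∃ i : Fin (n + 1), r i.castSucc ≤ l ∧ l < r i.succ := by
        classical
        set S : Finset (Fin (n + 1)) := Finset.univ.filter fun i => r i.castSucc ≤ l with hS
        have h0S : (0 : Fin (n + 1)) ∈ S := by
          simp only [hS, Finset.mem_filter, Finset.mem_univ, true_and]
          have : (0 : Fin (n + 1)).castSucc = (0 : Fin (n + 2)) := rfl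
          rw [this, hr0]; exact hl0
        have hne : S.Nonempty := ⟨0, h0S⟩
        refine ⟨S.max' hne, ?_, ?_⟩
        · have := S.max'_mem hne
          simpa only [hS, Finset.mem_filter, Finset.mem_univ, true_and] using this
        · by_contra hcon
          push_neg at hcon
          set i := S.max' hne
          by_cases hlast : i = Fin.last n
          · have : r i.succ = 1 := by rw [hlast, Fin.succ_last, hr1]
            rw [this] at hcon
            exact absurd h1 (not_lt.mpr hcon)
          · have hival : (i : ℕ) < n := by
              have := Fin.lt_last_iff_ne_last.mpr hlast
              omega
            set j : Fin (n + 1) := ⟨(i : ℕ) + 1, by omega⟩ with hj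
            have hjc : j.castSucc = i.succ := by
              apply Fin.ext; simp [hj]
            have hjS : j ∈ S := by
              simp only [hS, Finset.mem_filter, Finset.mem_univ, true_and, hjc]
              exact hcon
            have := S.le_max' j hjS
            have : (j : ℕ) ≤ (i : ℕ) := this
            simp [hj] at this
      have hγl : γ l = a i := hγ i l hbl hlc
      calc VaR μ (γ l) (fun ω => X ω + (1 - l) * Y ω)
          = VaR μ (a i) (fun ω => X ω + (1 - l) * Y ω) := by rw [hγl]
        _ ≤ VaR μ (a i) (fun ω => X ω + (1 - r i.succ) * Y ω) := by
            apply VaR_antitone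
            filter_upwards [hY0] with ω hω
            have : (1 - r i.succ) * Y ω ≤ (1 - l) * Y ω :=
              mul_le_mul_of_nonneg_right (by linarith) hω
            linarith
        _ ≤ _ := le_iSup (fun i : Fin (n + 1) =>
            VaR μ (a i) (fun ω => X ω + (1 - r i.succ) * Y ω)) i
  · -- sup ≤ RecVaR
    apply iSup_le
    intro i
    set b := r i.castSucc with hb
    set c := r i.succ with hc
    set d := c - b with hdd
    have hd : 0 < d := by simp only [hdd]; linarith [hbc i]
    set L : ℕ → ℝ := fun k => c - d / (k + 1) with hL
    have hLb : ∀ k : ℕ, b ≤ L k := by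
      intro k
      have h1k : (0:ℝ) < (k:ℝ) + 1 := by positivity
      have : d / (k + 1) ≤ d := by
        rw [div_le_iff₀ h1k]; nlinarith
      simp only [hL]; linarith
    have hLc : ∀ k : ℕ, L k < c := by
      intro k
      have : 0 < d / ((k:ℝ) + 1) := by positivity
      simp only [hL]; linarith
    have hLmem : ∀ k : ℕ, L k ∈ Set.Icc (0:ℝ) 1 := fun k =>
      ⟨le_trans (hb0 i) (hLb k), le_of_lt (lt_of_lt_of_le (hLc k) (hc1 i))⟩
    have hγL : ∀ k : ℕ, γ (L k) = a i := fun k => hγ i (L k) (hLb k) (hLc k)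
    have hLmono : ∀ k : ℕ, L k ≤ L (k + 1) := by
      intro k
      have h1 : (0:ℝ) < (k:ℝ) + 1 := by positivity
      have h2 : (0:ℝ) < ((k:ℕ)+1:ℕ) + 1 := by positivity
      have : d / (((k:ℕ)+1:ℕ) + 1) ≤ d / ((k:ℝ) + 1) := by
        apply div_le_div_of_nonneg_left (le_of_lt hd) h1
        push_cast; linarith
      simp only [hL]; push_cast at this ⊢; linarith
    -- key step
    by_contra hcon
    push_neg at hcon
    obtain ⟨x, hx1, hx2⟩ := EReal.exists_between_coe_real hcon
    have hVk : ∀ k : ℕ, VaR μ (a i) (fun ω => X ω + (1 - L k) * Y ω) < (x : EReal) := by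
      intro k
      refine lt_of_le_of_lt ?_ hx1
      have := le_iSup (fun l : Set.Icc (0:ℝ) 1 =>
        VaR μ (γ l) (fun ω => X ω + (1 - (l : ℝ)) * Y ω)) ⟨L k, hLmem k⟩
      rw [RecVaR]
      simpa only [hγL k] using this
    have hmk : ∀ k : ℕ, μ {ω | X ω + (1 - L k) * Y ω + x < 0} ≤ ENNReal.ofReal (a i) :=
      fun k => measure_le_of_VaR_lt (hVk k)
    -- limit argument
    set G : Set Ω := {ω | 0 ≤ Y ω} with hG
    set s : ℕ → Set Ω := fun k => {ω | X ω + (1 - L k) * Y ω + x < 0} ∩ G with hs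
    have hsmono : Monotone s := by
      apply monotone_nat_of_le_succ
      intro k ω hω
      obtain ⟨hω1, hω2⟩ := hω
      refine ⟨?_, hω2⟩
      have hy : 0 ≤ Y ω := hω2
      have h1 : X ω + (1 - L k) * Y ω + x < 0 := hω1
      have : (1 - L (k+1)) * Y ω ≤ (1 - L k) * Y ω :=
        mul_le_mul_of_nonneg_right (by linarith [hLmono k]) hy
      show X ω + (1 - L (k+1)) * Y ω + x < 0
      linarith
    have hsub : {ω | X ω + (1 - c) * Y ω + x < 0} ⊆ (⋃ k, s k) ∪ Gᶜ := by
      intro ω hω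
      by_cases hy : 0 ≤ Y ω
      · left
        set ε := -(X ω + (1 - c) * Y ω + x) with hε
        have hε0 : 0 < ε := by simp only [hε]; have := Set.mem_setOf_eq ▸ hω; linarith [hω]
        obtain ⟨k, hk⟩ := exists_nat_gt (d * Y ω / ε)
        refine Set.mem_iUnion.mpr ⟨k, ?_, hy⟩
        have h1k : (0:ℝ) < (k:ℝ) + 1 := by positivity
        have hdy : d * Y ω < ε * ((k:ℝ) + 1) := by
          have := (div_lt_iff₀ hε0).mp hk
          nlinarith
        have : d / ((k:ℝ) + 1) * Y ω < ε := by
          rw [div_mul_eq_mul_div, div_lt_iff₀ h1k]; linarith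
        show X ω + (1 - L k) * Y ω + x < 0
        have hLk : (1 - L k) * Y ω = (1 - c) * Y ω + d / ((k:ℝ) + 1) * Y ω := by
          simp only [hL]; ring
        rw [hLk]
        simp only [hε] at this
        linarith
      · right; exact hy
    have hGc : μ Gᶜ = 0 := by
      have h := ae_iff.mp hY0
      simpa only [hG, Set.compl_setOf] using h
    have hfinal : μ {ω | X ω + (1 - c) * Y ω + x < 0} ≤ ENNReal.ofReal (a i) := by
      calc μ {ω | X ω + (1 - c) * Y ω + x < 0}
          ≤ μ ((⋃ k, s k) ∪ Gᶜ) := measure_mono hsub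
        _ ≤ μ (⋃ k, s k) + μ Gᶜ := measure_union_le _ _
        _ = μ (⋃ k, s k) := by rw [hGc, add_zero]
        _ = ⨆ k, μ (s k) := (hsmono.directed_le).measure_iUnion
        _ ≤ ENNReal.ofReal (a i) := by
            apply iSup_le
            intro k
            exact le_trans (measure_mono Set.inter_subset_left) (hmk k)
    have : VaR μ (a i) (fun ω => X ω + (1 - c) * Y ω) ≤ (x : EReal) :=
      sInf_le ⟨x, rfl, hfinal⟩
    exact absurd (lt_of_le_of_lt this hx2) (lt_irrefl _)
end

section
/- RecVaR_γ is star-shaped in the first component: for all random variables X, Y with Y ≥ 0 almost surely and all a ≥ 1, RecVaR_γ(aX, Y) ≥ a·RecVaR_γ(X,Y). -/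
open MeasureTheory

variable {Ω : Type*} [MeasurableSpace Ω]

/-- Key lemma: if `W ≤ a·Z` a.e. with `a > 0`, then `a · VaR_α(Z) ≤ VaR_α(W)`. -/
lemma mul_VaR_le (μ : Measure Ω) (α : ℝ) (Z W : Ω → ℝ) (a : ℝ) (ha : 0 < a)
    (hZW : ∀ᵐ ω ∂μ, W ω ≤ a * Z ω) :
    (a : EReal) * VaR μ α Z ≤ VaR μ α W := by
  apply le_sInf
  rintro y ⟨x, rfl, hx⟩
  have hmem : ((x / a : ℝ) : EReal) ∈
      {y : EReal | ∃ x : ℝ, y = (x : EReal) ∧ μ {ω | Z ω + x < 0} ≤ ENNReal.ofReal α} := by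
    refine ⟨x / a, rfl, le_trans (measure_mono_ae ?_) hx⟩
    filter_upwards [hZW] with ω hω hlt
    have : a * Z ω + x < 0 := by
      have := mul_lt_mul_of_pos_left hlt ha
      rw [mul_zero, mul_add, mul_div_cancel₀ _ (ne_of_gt ha)] at this
      linarith
    show W ω + x < 0
    linarith
  have h1 : VaR μ α Z ≤ ((x / a : ℝ) : EReal) := sInf_le hmem
  rw [EReal.coe_div] at h1
  rw [EReal.mul_comm]
  exact (EReal.le_div_iff_mul_le (by exact_mod_cast ha) (EReal.coe_ne_top a)).mp h1

/-- `RecVaR_γ` is star-shaped in the first component: for `Y ≥ 0` a.s.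
and `a ≥ 1`, `RecVaR_γ(aX, Y) ≥ a · RecVaR_γ(X, Y)`. -/
theorem recVaR_star_shaped (μ : Measure Ω) [IsProbabilityMeasure μ]
    (γ : ℝ → ℝ) (hγ : ∀ l ∈ Set.Icc (0:ℝ) 1, γ l ∈ Set.Ioo (0:ℝ) 1)
    (hγmono : MonotoneOn γ (Set.Icc (0:ℝ) 1))
    (X Y : Ω → ℝ) (hY0 : ∀ᵐ ω ∂μ, 0 ≤ Y ω) (a : ℝ) (ha : 1 ≤ a) :
    (a : EReal) * RecVaR μ γ X Y ≤ RecVaR μ γ (fun ω => a * X ω) Y := by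
  have ha0 : (0:ℝ) < a := lt_of_lt_of_le one_pos ha
  rw [EReal.mul_comm, ← EReal.le_div_iff_mul_le (by exact_mod_cast ha0) (EReal.coe_ne_top a)]
  apply iSup_le
  intro l
  rw [EReal.le_div_iff_mul_le (by exact_mod_cast ha0) (EReal.coe_ne_top a), EReal.mul_comm]
  refine le_trans (mul_VaR_le μ (γ l) _ _ a ha0 ?_)
    (le_iSup (fun l : Set.Icc (0:ℝ) 1 =>
      VaR μ (γ l) (fun ω => a * X ω + (1 - (l : ℝ)) * Y ω)) l)
  filter_upwards [hY0] with ω hω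
  have hl : (l : ℝ) ≤ 1 := l.2.2
  nlinarith [mul_nonneg (sub_nonneg.mpr hl) hω]
end

section
/- If γ:[0,1]→(0,1) is piecewise constant with values α₁<...<α_{n+1} on intervals [r_{i−1}, r_i) (and [r_n, 1]) where 0=r₀<r₁<...<r_n<r_{n+1}=1, then for all integrable X, Y with Y ≥ 0 a.s., RecAVaR_γ(X,Y) = max over i=1,...,n+1 of AVaR_{α_i}(X + (1−r_i)Y). -/
open MeasureTheory

variable {Ω : Type*} [MeasurableSpace Ω]

open Set Filter Topology
open scoped ENNReal

section AuxLemmas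


variable {μ : Measure Ω} {Z W : Ω → ℝ} {β β' α x : ℝ}

lemma VaR_le_coe (h : μ {ω | Z ω + x < 0} ≤ ENNReal.ofReal β) : VaR μ β Z ≤ (x : EReal) :=
  sInf_le ⟨x, rfl, h⟩

lemma coe_le_VaR (h : ENNReal.ofReal β < μ {ω | Z ω + x < 0}) : (x : EReal) ≤ VaR μ β Z := by
  refine le_sInf ?_
  rintro y ⟨x', rfl, hx'⟩
  rw [EReal.coe_le_coe_iff]
  by_contra h'
  push_neg at h'
  have hsub : {ω | Z ω + x < 0} ⊆ {ω | Z ω + x' < 0} := fun ω hω => by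
    simp only [Set.mem_setOf_eq] at *; linarith
  exact absurd ((measure_mono hsub).trans hx') h.not_ge

lemma VaR_ne_top [IsFiniteMeasure μ] (hZ : Measurable Z) (hβ : 0 < β) : VaR μ β Z ≠ ⊤ := by
  have hanti : Antitone (fun n : ℕ => {ω | Z ω + n < 0}) := by
    intro m n hmn ω hω
    simp only [Set.mem_setOf_eq] at *
    have : (m : ℝ) ≤ n := Nat.cast_le.mpr hmn
    linarith
  have hempty : (⋂ n : ℕ, {ω | Z ω + n < 0}) = ∅ := by
    ext ω
    simp only [Set.mem_iInter, Set.mem_setOf_eq, Set.mem_empty_iff_false, iff_false, not_forall,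
      not_lt]
    obtain ⟨n, hn⟩ := exists_nat_gt (-(Z ω))
    exact ⟨n, by linarith⟩
  have htend : Tendsto (fun n : ℕ => μ {ω | Z ω + n < 0}) atTop (𝓝 0) := by
    have := tendsto_measure_iInter_atTop
      (μ := μ) (s := fun n : ℕ => {ω | Z ω + n < 0})
      (fun n => (measurableSet_lt (hZ.add_const _) measurable_const).nullMeasurableSet)
      hanti ⟨0, measure_ne_top μ _⟩
    rwa [hempty, measure_empty] at this
  obtain ⟨n, hn⟩ := (htend.eventually_lt_const
    (show (0 : ℝ≥0∞) < ENNReal.ofReal β by simpa using hβ)).exists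
  exact ((VaR_le_coe hn.le).trans_lt (EReal.coe_lt_top _)).ne

lemma VaR_ne_bot [IsProbabilityMeasure μ] (hβ : β < 1) : VaR μ β Z ≠ ⊥ := by
  have hmono : Monotone (fun n : ℕ => {ω | Z ω + (-(n : ℝ)) < 0}) := by
    intro m n hmn ω hω
    simp only [Set.mem_setOf_eq] at *
    have : (m : ℝ) ≤ n := Nat.cast_le.mpr hmn
    linarith
  have huniv : (⋃ n : ℕ, {ω | Z ω + (-(n : ℝ)) < 0}) = Set.univ := by
    ext ω
    simp only [Set.mem_iUnion, Set.mem_setOf_eq, Set.mem_univ, iff_true]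
    obtain ⟨n, hn⟩ := exists_nat_gt (Z ω)
    exact ⟨n, by linarith⟩
  have htend := tendsto_measure_iUnion_atTop (μ := μ) hmono
  rw [huniv] at htend
  have h1 : ENNReal.ofReal β < μ Set.univ := by
    rw [measure_univ]
    exact lt_of_lt_of_le (ENNReal.ofReal_lt_one.mpr hβ) le_rfl
  obtain ⟨n, hn⟩ := (htend.eventually_const_lt h1).exists
  intro hbot
  have := coe_le_VaR hn
  rw [hbot, le_bot_iff] at this
  exact EReal.coe_ne_bot _ this

lemma VaR_anti_arg (h : Z ≤ᵐ[μ] W) : VaR μ β W ≤ VaR μ β Z := by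
  apply sInf_le_sInf
  rintro y ⟨x', rfl, hx'⟩
  refine ⟨x', rfl, le_trans (measure_mono_ae ?_) hx'⟩
  filter_upwards [h] with ω hω hmem
  have hmem' : W ω + x' < 0 := hmem
  show Z ω + x' < 0
  linarith

lemma VaR_anti_level : Antitone fun β => VaR μ β Z := by
  intro β β' hββ'
  apply sInf_le_sInf
  rintro y ⟨x', rfl, hx'⟩
  exact ⟨x', rfl, hx'.trans (ENNReal.ofReal_le_ofReal hββ')⟩

lemma measurable_VaR_toReal : Measurable fun β => (VaR μ β Z).toReal :=
  (VaR_anti_level (μ := μ) (Z := Z)).measurable.ereal_toReal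




variable {μ : Measure Ω} {Z W : Ω → ℝ} {β β' α x : ℝ}

lemma VaR_toReal_integrableOn [IsProbabilityMeasure μ] (hZ : Measurable Z)
    (hZi : Integrable Z μ) (hα0 : 0 < α) (hα1 : α < 1) :
    IntegrableOn (fun β => (VaR μ β Z).toReal) (Set.Ioc 0 α) := by
  set f : ℝ → ℝ := fun β => (VaR μ β Z).toReal with hfdef
  have hfm : Measurable f := measurable_VaR_toReal
  have hfα_le : ∀ β ∈ Set.Ioc (0:ℝ) α, f α ≤ f β := by
    intro β hβ
    exact EReal.toReal_le_toReal (VaR_anti_level hβ.2)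
      (VaR_ne_bot hα1) (VaR_ne_top hZ hβ.1)
  -- key finiteness of the positive part
  have key1 : ∫⁻ β in Set.Ioc (0:ℝ) α, ENNReal.ofReal (max (f β) 0) < ⊤ := by
    rw [lintegral_eq_lintegral_meas_lt (f := fun β => max (f β) 0) (volume.restrict (Set.Ioc (0:ℝ) α))
      (Filter.Eventually.of_forall fun β => le_max_right _ _)
      ((hfm.max measurable_const).aemeasurable)]
    have hb : ∀ t ∈ Set.Ioi (0:ℝ),
        (volume.restrict (Set.Ioc (0:ℝ) α)) {β | t < max (f β) 0} ≤ μ {ω | Z ω + t < 0} := by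
      intro t ht
      rw [Measure.restrict_apply (measurableSet_lt measurable_const (hfm.max measurable_const))]
      have hsub : {β | t < max (f β) 0} ∩ Set.Ioc 0 α ⊆
          Set.Ioc 0 ((μ {ω | Z ω + t < 0}).toReal) := by
        rintro β ⟨hβ1, hβ2⟩
        have ht0 : (0:ℝ) < t := ht
        have htf : t < f β := by
          rcases lt_max_iff.mp (show t < max (f β) 0 from hβ1) with h | h
          · exact h
          · linarith
        have hne : ENNReal.ofReal β < μ {ω | Z ω + t < 0} := by
          by_contra hc
          push_neg at hc
          have hle := VaR_le_coe hc
          have h1 : VaR μ β Z ≠ ⊥ := VaR_ne_bot (lt_of_le_of_lt hβ2.2 hα1)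
          have : (VaR μ β Z).toReal ≤ t := by
            have := EReal.toReal_le_toReal hle h1 (EReal.coe_ne_top t)
            simpa using this
          simp only [hfdef] at htf
          linarith
        refine ⟨hβ2.1, ?_⟩
        have hμt : μ {ω | Z ω + t < 0} ≠ ⊤ := measure_ne_top μ _
        have := (ENNReal.toReal_lt_toReal ENNReal.ofReal_ne_top hμt).mpr hne
        rw [ENNReal.toReal_ofReal hβ2.1.le] at this
        exact this.le
      calc volume ({β | t < max (f β) 0} ∩ Set.Ioc 0 α)
          ≤ volume (Set.Ioc 0 ((μ {ω | Z ω + t < 0}).toReal)) := measure_mono hsub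
        _ = ENNReal.ofReal ((μ {ω | Z ω + t < 0}).toReal - 0) := Real.volume_Ioc
        _ = μ {ω | Z ω + t < 0} := by
            rw [sub_zero, ENNReal.ofReal_toReal (measure_ne_top μ _)]
    calc ∫⁻ t in Set.Ioi (0:ℝ), (volume.restrict (Set.Ioc (0:ℝ) α)) {β | t < max (f β) 0}
        ≤ ∫⁻ t in Set.Ioi (0:ℝ), μ {ω | Z ω + t < 0} := by
          refine lintegral_mono_ae ?_
          exact (ae_restrict_iff' measurableSet_Ioi).2 (Filter.Eventually.of_forall hb)
      _ = ∫⁻ ω, ENNReal.ofReal (max (-(Z ω)) 0) ∂μ := by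
          rw [lintegral_eq_lintegral_meas_lt (f := fun ω => max (-(Z ω)) 0) μ
            (Filter.Eventually.of_forall fun ω => le_max_right _ _)
            ((hZ.neg.max measurable_const).aemeasurable)]
          refine setLIntegral_congr_fun measurableSet_Ioi
            (fun t ht => ?_)
          congr 1
          ext ω
          have ht0 : (0:ℝ) < t := ht
          simp only [Set.mem_setOf_eq, lt_max_iff]
          constructor
          · intro h; left; linarith
          · rintro (h | h) <;> linarith
      _ ≤ ∫⁻ ω, ENNReal.ofReal ‖Z ω‖ ∂μ := by
          refine lintegral_mono fun ω => ENNReal.ofReal_le_ofReal ?_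
          rw [Real.norm_eq_abs]
          exact max_le (neg_le_abs _) (abs_nonneg _)
      _ < ⊤ := (hasFiniteIntegral_iff_norm Z).mp hZi.hasFiniteIntegral
  refine ⟨hfm.aestronglyMeasurable, ?_⟩
  rw [hasFiniteIntegral_iff_norm]
  have key2 : ∀ β ∈ Set.Ioc (0:ℝ) α, ENNReal.ofReal ‖f β‖ ≤
      ENNReal.ofReal (max (f β) 0) + ENNReal.ofReal ‖f α‖ := by
    intro β hβ
    have h1 : ‖f β‖ ≤ max (f β) 0 + ‖f α‖ := by
      rw [Real.norm_eq_abs, Real.norm_eq_abs]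
      rcases abs_cases (f β) with ⟨h, _⟩ | ⟨h, _⟩
      · have := le_max_left (f β) 0
        have := abs_nonneg (f α)
        linarith
      · have := hfα_le β hβ
        have := neg_le_abs (f α)
        have := le_max_right (f β) 0
        linarith
    calc ENNReal.ofReal ‖f β‖ ≤ ENNReal.ofReal (max (f β) 0 + ‖f α‖) :=
          ENNReal.ofReal_le_ofReal h1
      _ = _ := ENNReal.ofReal_add (le_max_right _ _) (norm_nonneg _)
  calc ∫⁻ β in Set.Ioc (0:ℝ) α, ENNReal.ofReal ‖f β‖
      ≤ ∫⁻ β in Set.Ioc (0:ℝ) α, (ENNReal.ofReal (max (f β) 0) + ENNReal.ofReal ‖f α‖) := by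
        refine lintegral_mono_ae ?_
        exact (ae_restrict_iff' measurableSet_Ioc).2 (Filter.Eventually.of_forall key2)
    _ = (∫⁻ β in Set.Ioc (0:ℝ) α, ENNReal.ofReal (max (f β) 0)) +
        ENNReal.ofReal ‖f α‖ * volume (Set.Ioc (0:ℝ) α) := by
        rw [lintegral_add_right _ measurable_const, setLIntegral_const]
    _ < ⊤ := by
        refine ENNReal.add_lt_top.mpr ⟨key1, ?_⟩
        refine ENNReal.mul_lt_top ENNReal.ofReal_lt_top ?_
        rw [Real.volume_Ioc]
        exact ENNReal.ofReal_lt_top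




variable {μ : Measure Ω} {Z W : Ω → ℝ} {α : ℝ}

lemma AVaR_eq (hα0 : 0 < α) :
    AVaR μ α Z = (1 / α) * ∫ β in Set.Ioc (0:ℝ) α, (VaR μ β Z).toReal := by
  rw [AVaR, intervalIntegral.integral_of_le hα0.le]

lemma AVaR_anti [IsProbabilityMeasure μ] (hZ : Measurable Z) (hW : Measurable W)
    (hZi : Integrable Z μ) (hWi : Integrable W μ) (hα0 : 0 < α) (hα1 : α < 1)
    (h : Z ≤ᵐ[μ] W) : AVaR μ α W ≤ AVaR μ α Z := by
  rw [AVaR_eq hα0, AVaR_eq hα0]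
  refine mul_le_mul_of_nonneg_left ?_ (by positivity)
  refine setIntegral_mono_on (VaR_toReal_integrableOn hW hWi hα0 hα1)
    (VaR_toReal_integrableOn hZ hZi hα0 hα1) measurableSet_Ioc ?_
  intro β hβ
  exact EReal.toReal_le_toReal (VaR_anti_arg h)
    (VaR_ne_bot (hβ.2.trans_lt hα1)) (VaR_ne_top hZ hβ.1)

lemma AVaR_tendsto [IsProbabilityMeasure μ] {X Y : Ω → ℝ}
    (hX : Measurable X) (hY : Measurable Y)
    (hXi : Integrable X μ) (hYi : Integrable Y μ) (hY0 : ∀ᵐ ω ∂μ, 0 ≤ Y ω)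
    {c : ℕ → ℝ} {c₀ : ℝ} (hanti : Antitone c) (hge : ∀ k, c₀ ≤ c k)
    (hc : Filter.Tendsto c Filter.atTop (nhds c₀)) (hα0 : 0 < α) (hα1 : α < 1) :
    Filter.Tendsto (fun k => AVaR μ α (fun ω => X ω + c k * Y ω)) Filter.atTop
      (nhds (AVaR μ α (fun ω => X ω + c₀ * Y ω))) := by
  have hZm : ∀ t : ℝ, Measurable (fun ω => X ω + t * Y ω) :=
    fun t => hX.add (measurable_const.mul hY)
  have hZi : ∀ t : ℝ, Integrable (fun ω => X ω + t * Y ω) μ :=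
    fun t => hXi.add (hYi.const_mul t)
  have hargmono : ∀ s t : ℝ, s ≤ t →
      (fun ω => X ω + s * Y ω) ≤ᵐ[μ] (fun ω => X ω + t * Y ω) := by
    intro s t hst
    filter_upwards [hY0] with ω hω
    have : s * Y ω ≤ t * Y ω := mul_le_mul_of_nonneg_right hst hω
    simpa using this
  -- pointwise convergence of the integrands
  have hptwise : ∀ β ∈ Set.Ioc (0:ℝ) α,
      Monotone (fun k => (VaR μ β (fun ω => X ω + c k * Y ω)).toReal) ∧
      Filter.Tendsto (fun k => (VaR μ β (fun ω => X ω + c k * Y ω)).toReal) Filter.atTop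
        (nhds ((VaR μ β (fun ω => X ω + c₀ * Y ω)).toReal)) := by
    intro β hβ
    have hβ1 : β < 1 := hβ.2.trans_lt hα1
    set g : ℕ → ℝ := fun k => (VaR μ β (fun ω => X ω + c k * Y ω)).toReal with hgdef
    set L : ℝ := (VaR μ β (fun ω => X ω + c₀ * Y ω)).toReal with hLdef
    have gmono : Monotone g := by
      intro k k' hkk'
      exact EReal.toReal_le_toReal (VaR_anti_arg (hargmono _ _ (hanti hkk')))
        (VaR_ne_bot hβ1) (VaR_ne_top (hZm _) hβ.1)
    have gle : ∀ k, g k ≤ L := by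
      intro k
      exact EReal.toReal_le_toReal (VaR_anti_arg (hargmono _ _ (hge k)))
        (VaR_ne_bot hβ1) (VaR_ne_top (hZm _) hβ.1)
    have hsup : ∀ x : ℝ, x < L → ∃ k, x ≤ g k := by
      intro x hx
      have hcoe : (x : EReal) < VaR μ β (fun ω => X ω + c₀ * Y ω) := by
        rw [← EReal.coe_toReal (VaR_ne_top (hZm c₀) hβ.1) (VaR_ne_bot hβ1)]
        exact_mod_cast hx
      have hμx : ENNReal.ofReal β < μ {ω | (X ω + c₀ * Y ω) + x < 0} := by
        by_contra hcon
        push_neg at hcon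
        exact absurd (VaR_le_coe hcon) hcoe.not_ge
      set N : Set Ω := {ω | Y ω < 0} with hNdef
      have hN : μ N = 0 := by
        have : {ω | Y ω < 0} = {ω | ¬ 0 ≤ Y ω} := by ext ω; simp
        rw [hNdef, this]
        exact hY0
      set E : ℕ → Set Ω := fun k => {ω | X ω + c k * Y ω + x < 0} \ N with hEdef
      have hEmono : Monotone E := by
        intro k k' hkk' ω hω
        obtain ⟨hω1, hω2⟩ := hω
        have hωY : 0 ≤ Y ω := not_lt.mp hω2
        refine ⟨?_, hω2⟩
        have h1 : X ω + c k * Y ω + x < 0 := hω1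
        show X ω + c k' * Y ω + x < 0
        have := mul_le_mul_of_nonneg_right (hanti hkk' : c k' ≤ c k) hωY
        linarith
      have hsub : {ω | (X ω + c₀ * Y ω) + x < 0} \ N ⊆ ⋃ k, E k := by
        rintro ω ⟨hω1, hω2⟩
        have htt : Filter.Tendsto (fun k => X ω + c k * Y ω + x) Filter.atTop
            (nhds (X ω + c₀ * Y ω + x)) := by
          have h1 := (hc.mul_const (Y ω)).const_add (X ω)
          exact h1.add_const x
        have hlt : X ω + c₀ * Y ω + x < 0 := hω1
        obtain ⟨k, hk⟩ := (htt.eventually_lt_const hlt).exists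
        exact Set.mem_iUnion.mpr ⟨k, hk, hω2⟩
      have hlt2 : ENNReal.ofReal β < μ (⋃ k, E k) := by
        calc ENNReal.ofReal β < μ {ω | (X ω + c₀ * Y ω) + x < 0} := hμx
          _ = μ ({ω | (X ω + c₀ * Y ω) + x < 0} \ N) := (measure_diff_null hN).symm
          _ ≤ μ (⋃ k, E k) := measure_mono hsub
      rw [hEmono.directed_le.measure_iUnion] at hlt2
      obtain ⟨k, hk⟩ := lt_iSup_iff.mp hlt2
      have hk2 : ENNReal.ofReal β < μ {ω | (X ω + c k * Y ω) + x < 0} :=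
        hk.trans_le (measure_mono Set.diff_subset)
      have := coe_le_VaR hk2
      refine ⟨k, ?_⟩
      have h2 := EReal.toReal_le_toReal this (EReal.coe_ne_bot x) (VaR_ne_top (hZm _) hβ.1)
      simpa using h2
    have hbdd : BddAbove (Set.range g) := ⟨L, by rintro _ ⟨k, rfl⟩; exact gle k⟩
    have hiSup : ⨆ k, g k = L := by
      refine le_antisymm (ciSup_le gle) ?_
      by_contra hcon
      push_neg at hcon
      obtain ⟨x, h1, h2⟩ := exists_between hcon
      obtain ⟨k, hk⟩ := hsup x h2
      exact absurd (hk.trans (le_ciSup hbdd k)) h1.not_ge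
    refine ⟨gmono, ?_⟩
    have := tendsto_atTop_ciSup gmono hbdd
    rwa [hiSup] at this
  -- integral convergence
  have hint : ∀ k, IntegrableOn (fun β => (VaR μ β (fun ω => X ω + c k * Y ω)).toReal)
      (Set.Ioc (0:ℝ) α) := fun k => VaR_toReal_integrableOn (hZm _) (hZi _) hα0 hα1
  have hintL : IntegrableOn (fun β => (VaR μ β (fun ω => X ω + c₀ * Y ω)).toReal)
      (Set.Ioc (0:ℝ) α) := VaR_toReal_integrableOn (hZm _) (hZi _) hα0 hα1
  have hItend := integral_tendsto_of_tendsto_of_monotone (μ := volume.restrict (Set.Ioc (0:ℝ) α))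
    hint hintL
    ((ae_restrict_iff' measurableSet_Ioc).2
      (Filter.Eventually.of_forall fun β hβ => (hptwise β hβ).1))
    ((ae_restrict_iff' measurableSet_Ioc).2
      (Filter.Eventually.of_forall fun β hβ => (hptwise β hβ).2))
  have final := hItend.const_mul (1 / α)
  simp only [AVaR_eq hα0]
  exact final




lemma exists_fin_interval {n : ℕ} {r : Fin (n+2) → ℝ} (hr : StrictMono r) (hr0 : r 0 = 0)
    (hr1 : r (Fin.last (n+1)) = 1) {l : ℝ} (h0 : 0 ≤ l) (h1 : l < 1) :
    ∃ i : Fin (n+1), r i.castSucc ≤ l ∧ l < r i.succ := by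
  classical
  set T := Finset.univ.filter (fun j : Fin (n+2) => r j ≤ l) with hT
  have hne : T.Nonempty := ⟨0, by simp [hT, hr0, h0]⟩
  set k := T.max' hne with hkdef
  have hk : r k ≤ l := (Finset.mem_filter.mp (T.max'_mem hne)).2
  have hklast : k ≠ Fin.last (n+1) := by
    intro h
    rw [h, hr1] at hk
    linarith
  have hklt : (k : ℕ) < n + 1 := by
    have h2 := k.isLt
    have h3 : (k : ℕ) ≠ n + 1 := fun h => hklast (Fin.ext h)
    omega
  refine ⟨⟨(k : ℕ), hklt⟩, ?_, ?_⟩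
  · have : (⟨(k : ℕ), hklt⟩ : Fin (n+1)).castSucc = k := by
      apply Fin.ext; simp
    rw [this]; exact hk
  · by_contra hcon
    push_neg at hcon
    have hmem : (⟨(k : ℕ), hklt⟩ : Fin (n+1)).succ ∈ T := by
      simp only [hT, Finset.mem_filter, Finset.mem_univ, true_and]
      exact hcon
    have hle := T.le_max' _ hmem
    rw [← hkdef] at hle
    have : (k : ℕ) + 1 ≤ (k : ℕ) := by
      have := (Fin.le_iff_val_le_val.mp hle)
      simpa using this
    omega

end AuxLemmas

/-- if `γ` is piecewise constant with values `a 0 < ... < a n` on the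
intervals `[r_{i-1}, r_i)` determined by `0 = r 0 < ... < r (n+1) = 1` (last interval
closed at `1`), then for all integrable `X, Y` with `Y ≥ 0` a.s.,
`RecAVaR_γ(X,Y) = max_i AVaR_{α_i}(X + (1 - r_i) Y)`. -/
theorem recAVaR_piecewise_constant (μ : Measure Ω) [IsProbabilityMeasure μ]
    (n : ℕ) (r : Fin (n + 2) → ℝ) (a : Fin (n + 1) → ℝ)
    (hr : StrictMono r) (hr0 : r 0 = 0) (hr1 : r (Fin.last (n + 1)) = 1)
    (ha : StrictMono a) (ha0 : 0 < a 0) (ha1 : a (Fin.last n) < 1)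
    (γ : ℝ → ℝ)
    (hγ : ∀ (i : Fin (n + 1)) (l : ℝ), r i.castSucc ≤ l → l < r i.succ → γ l = a i)
    (hγ1 : γ 1 = a (Fin.last n))
    (X Y : Ω → ℝ) (hX : Measurable X) (hY : Measurable Y)
    (hXi : Integrable X μ) (hYi : Integrable Y μ)
    (hY0 : ∀ᵐ ω ∂μ, 0 ≤ Y ω) :
    RecAVaR μ γ X Y =
      ⨆ i : Fin (n + 1),
        ((AVaR μ (a i) (fun ω => X ω + (1 - r i.succ) * Y ω) : ℝ) : EReal) := by
  have hZm : ∀ t : ℝ, Measurable (fun ω => X ω + t * Y ω) :=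
    fun t => hX.add (measurable_const.mul hY)
  have hZi : ∀ t : ℝ, Integrable (fun ω => X ω + t * Y ω) μ :=
    fun t => hXi.add (hYi.const_mul t)
  have haipos : ∀ i : Fin (n+1), 0 < a i := fun i => lt_of_lt_of_le ha0 (ha.monotone i.zero_le)
  have hailt : ∀ i : Fin (n+1), a i < 1 := fun i =>
    lt_of_le_of_lt (ha.monotone (Fin.le_last i)) ha1
  have hrle1 : ∀ j : Fin (n+2), r j ≤ 1 := fun j => hr1 ▸ hr.monotone (Fin.le_last j)
  have hrnn : ∀ j : Fin (n+2), 0 ≤ r j := fun j => hr0 ▸ hr.monotone j.zero_le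
  apply le_antisymm
  · refine iSup_le ?_
    rintro ⟨l, hl⟩
    obtain ⟨hl0, hl1⟩ := hl
    rcases eq_or_lt_of_le hl1 with heq | hlt
    · subst heq
      have h2 : (fun ω => X ω + (1 - (1:ℝ)) * Y ω) =
          (fun ω => X ω + (1 - r (Fin.last n).succ) * Y ω) := by
        funext ω
        rw [Fin.succ_last, hr1]
      show ((AVaR μ (γ 1) (fun ω => X ω + (1 - (1:ℝ)) * Y ω) : ℝ) : EReal) ≤ _
      rw [hγ1, h2]
      exact le_iSup (fun i : Fin (n+1) =>
        ((AVaR μ (a i) (fun ω => X ω + (1 - r i.succ) * Y ω) : ℝ) : EReal)) (Fin.last n)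
    · obtain ⟨i, hi1, hi2⟩ := exists_fin_interval hr hr0 hr1 hl0 hlt
      have hγl : γ l = a i := hγ i l hi1 hi2
      have hmono : (fun ω => X ω + (1 - r i.succ) * Y ω) ≤ᵐ[μ]
          (fun ω => X ω + (1 - l) * Y ω) := by
        filter_upwards [hY0] with ω hω
        have h3 : (1 - r i.succ) * Y ω ≤ (1 - l) * Y ω :=
          mul_le_mul_of_nonneg_right (by linarith) hω
        simpa using h3
      have hA := AVaR_anti (hZm (1 - r i.succ)) (hZm (1 - l)) (hZi _) (hZi _)
        (haipos i) (hailt i) hmono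
      show ((AVaR μ (γ l) (fun ω => X ω + (1 - l) * Y ω) : ℝ) : EReal) ≤ _
      rw [hγl]
      calc ((AVaR μ (a i) (fun ω => X ω + (1 - l) * Y ω) : ℝ) : EReal)
          ≤ ((AVaR μ (a i) (fun ω => X ω + (1 - r i.succ) * Y ω) : ℝ) : EReal) :=
            EReal.coe_le_coe_iff.mpr hA
        _ ≤ _ := le_iSup (fun i : Fin (n+1) =>
            ((AVaR μ (a i) (fun ω => X ω + (1 - r i.succ) * Y ω) : ℝ) : EReal)) i
  · refine iSup_le fun i => ?_
    set d : ℝ := r i.succ - r i.castSucc with hd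
    have hdpos : 0 < d := sub_pos.mpr (hr (Fin.castSucc_lt_succ (i := i)))
    set c : ℕ → ℝ := fun k => (1 - r i.succ) + d / (k + 1) with hcdef
    have hanti : Antitone c := by
      intro k k' hk
      simp only [hcdef]
      have hkk : (k : ℝ) ≤ (k' : ℝ) := Nat.cast_le.mpr hk
      have hd' : (0:ℝ) ≤ d := hdpos.le
      gcongr
    have hge : ∀ k, (1 - r i.succ) ≤ c k := fun k => le_add_of_nonneg_right (by positivity)
    have hc : Filter.Tendsto c Filter.atTop (nhds (1 - r i.succ)) := by
      have h2 : Filter.Tendsto (fun k : ℕ => ((k : ℝ) + 1)) Filter.atTop Filter.atTop :=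
        Filter.tendsto_atTop_add_const_right _ 1 tendsto_natCast_atTop_atTop
      have h1 : Filter.Tendsto (fun k : ℕ => d / ((k : ℝ) + 1)) Filter.atTop (nhds 0) :=
        Filter.Tendsto.div_atTop tendsto_const_nhds h2
      have := (tendsto_const_nhds (x := 1 - r i.succ) (f := Filter.atTop (α := ℕ))).add h1
      simpa using this
    have hAV := AVaR_tendsto hX hY hXi hYi hY0 hanti hge hc (haipos i) (hailt i)
    have hlk : ∀ k : ℕ, (1 - c k) ∈ Set.Icc (0:ℝ) 1 ∧
        r i.castSucc ≤ 1 - c k ∧ 1 - c k < r i.succ := by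
      intro k
      have hke : 1 - c k = r i.succ - d / (k + 1) := by simp only [hcdef]; ring
      have h1 : d / ((k:ℝ) + 1) ≤ d := by
        rw [div_le_iff₀ (by positivity)]
        nlinarith [hdpos.le, Nat.cast_nonneg (α := ℝ) k]
      have h2 : 0 < d / ((k:ℝ) + 1) := by positivity
      refine ⟨⟨?_, ?_⟩, ?_, ?_⟩
      · rw [hke]
        have := hrnn i.castSucc
        linarith
      · rw [hke]
        have := hrle1 i.succ
        linarith
      · rw [hke]
        linarith
      · rw [hke]
        linarith
    have hterm : ∀ k : ℕ,
        ((AVaR μ (a i) (fun ω => X ω + c k * Y ω) : ℝ) : EReal) ≤ RecAVaR μ γ X Y := by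
      intro k
      obtain ⟨hmem, hge', hlt'⟩ := hlk k
      have hγk : γ (1 - c k) = a i := hγ i _ hge' hlt'
      have hle := le_iSup (fun l : Set.Icc (0:ℝ) 1 =>
        ((AVaR μ (γ l) (fun ω => X ω + (1 - (l : ℝ)) * Y ω) : ℝ) : EReal)) ⟨1 - c k, hmem⟩
      rw [RecAVaR]
      have he : (1 : ℝ) - (1 - c k) = c k := by ring
      rw [hγk, he] at hle
      exact hle
    by_contra hcon
    push_neg at hcon
    have hlt := hcon
    have hSnebot : RecAVaR μ γ X Y ≠ ⊥ := by
      intro h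
      have := hterm 0
      rw [h, le_bot_iff] at this
      exact EReal.coe_ne_bot _ this
    have hSnetop : RecAVaR μ γ X Y ≠ ⊤ := (hlt.trans (EReal.coe_lt_top _)).ne
    set s : ℝ := (RecAVaR μ γ X Y).toReal with hsdef
    have hS : RecAVaR μ γ X Y = (s : EReal) := (EReal.coe_toReal hSnetop hSnebot).symm
    have hslt : s < AVaR μ (a i) (fun ω => X ω + (1 - r i.succ) * Y ω) := by
      rw [hS] at hlt
      exact EReal.coe_lt_coe_iff.mp hlt
    obtain ⟨k, hk⟩ := (hAV.eventually_const_lt hslt).exists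
    have := hterm k
    rw [hS] at this
    exact absurd (EReal.coe_le_coe_iff.mp this) hk.not_ge
end
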